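/- Let q ∈ ℂ with q ≠ 0, let a₁, a₂, a₃, a₄ and b₁, b₂, b₃ be natural numbers, let z be a natural number with aᵢ ≤ z for all i and z ≤ b_y for all y, and set D = max(z+1, b₁−z, b₂−z, b₃−z). Assume q^{2d} ≠ 1 for all integers d with 1 ≤ d ≤ D. Define the Racah summand T_z = (−1)^z [z+1]_q! / (∏_{i=1}^{4} [z−a_i]_q! · ∏_{y=1}^{3} [b_y−z]_q!). Then T_z = (−1)^z · q^{P(z)} · ∏_{d=2}^{D} Φ_d(q²)^{E_d(z)}, where the integer exponents are E_d(z) = ⌊(z+1)/d⌋ − ∑_{i=1}^{4} ⌊(z−a_i)/d⌋ − ∑_{y=1}^{3} ⌊(b_y−z)/d⌋ and P(z) = (z+1)(−z)/2 − ∑_{i=1}^{4} (z−a_i)(1−(z−a_i))/2 − ∑_{y=1}^{3} (b_y−z)(1−(b_y−z))/2, and Φ_d(q²)^{E_d(z)} denotes the integer (possibly negative) power, well defined since Φ_d(q²) ≠ 0 for 2 ≤ d ≤ D under the stated hypothesis. -/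

import Mathlib

/-- The quantum integer `[n]_q = (qⁿ − q⁻ⁿ)/(q − q⁻¹)`. -/
noncomputable def qint (q : ℂ) (n : ℕ) : ℂ := (q ^ n - q⁻¹ ^ n) / (q - q⁻¹)

/-- The quantum factorial `[n]_q! = ∏_{m=1}^{n} [m]_q`, with `[0]_q! = 1`. -/
noncomputable def qfact (q : ℂ) (n : ℕ) : ℂ := ∏ m ∈ Finset.Icc 1 n, qint q m

/-- The Racah summand of the quantum 6j-symbol:
`T_z = (−1)^z [z+1]_q! / (∏_{i=1}^{4} [z−a_i]_q! · ∏_{y=1}^{3} [b_y−z]_q!)`. -/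
noncomputable def racahSummand (q : ℂ) (a : Fin 4 → ℕ) (b : Fin 3 → ℕ) (z : ℕ) : ℂ :=
  (-1) ^ z * qfact q (z + 1) /
    ((∏ i, qfact q (z - a i)) * ∏ y, qfact q (b y - z))

open Finset Polynomial


lemma aux_prod_zpow {α : Type*} (s : Finset α) (q : ℂ) (hq : q ≠ 0) (f : α → ℤ) :
    ∏ i ∈ s, q ^ f i = q ^ (∑ i ∈ s, f i) := by
  induction s using Finset.cons_induction with
  | empty => simp
  | cons a s ha ih => simp [Finset.prod_cons, Finset.sum_cons, zpow_add₀ hq, ih]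

lemma aux_S_val (n : ℕ) : ∑ m ∈ Icc 1 n, (1 - (m : ℤ)) = (n : ℤ) * (1 - n) / 2 := by
  have h : (∑ m ∈ Icc 1 n, (1 - (m : ℤ))) * 2 = (n : ℤ) * (1 - n) := by
    induction n with
    | zero => simp
    | succ n ih =>
      rw [Finset.sum_Icc_succ_top (by omega)]
      push_cast; push_cast at ih; ring_nf; ring_nf at ih; linarith
  omega

lemma aux_phi_ne (q : ℂ) (D : ℕ) (hqd : ∀ d : ℕ, 1 ≤ d → d ≤ D → q ^ (2 * d) ≠ 1) :
    ∀ d : ℕ, 1 ≤ d → d ≤ D → (cyclotomic d ℂ).eval (q ^ 2) ≠ 0 := by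
  intro d h1 h2 h0
  have hdvd : (cyclotomic d ℂ).eval (q ^ 2) ∣ ((X : ℂ[X]) ^ d - 1).eval (q ^ 2) :=
    Polynomial.eval_dvd (cyclotomic.dvd_X_pow_sub_one d ℂ)
  rw [h0] at hdvd
  have := zero_dvd_iff.mp hdvd
  simp only [eval_sub, eval_pow, eval_X, eval_one, sub_eq_zero] at this
  exact hqd d h1 h2 (by rw [pow_mul]; exact this)

lemma aux_qint (q : ℂ) (hq : q ≠ 0) (hq2 : q ^ 2 - 1 ≠ 0) (m : ℕ) (hm : 1 ≤ m) :
    qint q m = q ^ (1 - (m : ℤ)) * ∏ d ∈ m.divisors.erase 1, (cyclotomic d ℂ).eval (q ^ 2) := by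
  have hdiv : ∏ d ∈ m.divisors, (cyclotomic d ℂ).eval (q ^ 2) = (q ^ 2) ^ m - 1 := by
    have := congrArg (Polynomial.eval (q ^ 2)) (prod_cyclotomic_eq_X_pow_sub_one hm ℂ)
    simpa [Polynomial.eval_prod] using this
  have h1mem : 1 ∈ m.divisors := Nat.one_mem_divisors.mpr (by omega)
  have hsplit : (q ^ 2 - 1) * ∏ d ∈ m.divisors.erase 1, (cyclotomic d ℂ).eval (q ^ 2)
      = (q ^ 2) ^ m - 1 := by
    rw [← hdiv, ← Finset.mul_prod_erase _ _ h1mem, cyclotomic_one]; simp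
  have hz : q ^ ((1 : ℤ) - m) = q / q ^ m := by
    rw [zpow_sub₀ hq, zpow_one, zpow_natCast]
  have hsub : q - q⁻¹ ≠ 0 := by
    intro h
    apply hq2
    field_simp at h
    rw [mul_zero] at h
    exact h
  have hp : ∏ d ∈ m.divisors.erase 1, (cyclotomic d ℂ).eval (q ^ 2)
      = ((q ^ 2) ^ m - 1) / (q ^ 2 - 1) := by
    rw [eq_div_iff hq2]; linear_combination hsplit
  have e1 : q - q⁻¹ = (q ^ 2 - 1) / q := by field_simp
  have e2 : q ^ m - q⁻¹ ^ m = ((q ^ 2) ^ m - 1) / q ^ m := by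
    rw [inv_pow]
    field_simp
    ring
  rw [qint, hz, hp, e1, e2]
  rw [div_div_div_comm, div_mul_div_comm]
  field_simp

lemma aux_qfact (q : ℂ) (hq : q ≠ 0) (hq2 : q ^ 2 - 1 ≠ 0) (D n : ℕ) (hn : n ≤ D) :
    qfact q n = q ^ ((n : ℤ) * (1 - n) / 2) *
      ∏ d ∈ Icc 2 D, (cyclotomic d ℂ).eval (q ^ 2) ^ (n / d) := by
  rw [qfact]
  rw [Finset.prod_congr rfl (fun m hm => aux_qint q hq hq2 m (Finset.mem_Icc.mp hm).1)]
  rw [Finset.prod_mul_distrib, aux_prod_zpow _ q hq, aux_S_val]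
  congr 1
  have step : ∀ m ∈ Icc 1 n, ∏ d ∈ m.divisors.erase 1, (cyclotomic d ℂ).eval (q ^ 2)
      = ∏ d ∈ Icc 2 D, (if d ∣ m then (cyclotomic d ℂ).eval (q ^ 2) else 1) := by
    intro m hm
    rw [← Finset.prod_filter]
    congr 1
    ext d
    simp only [Finset.mem_erase, Nat.mem_divisors, Finset.mem_filter, Finset.mem_Icc]
    rw [Finset.mem_Icc] at hm
    constructor
    · rintro ⟨h1, h2, h3⟩
      have hd1 : 1 ≤ d := Nat.pos_of_ne_zero fun h => h3 (by rw [h] at h2; exact Nat.eq_zero_of_zero_dvd h2)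
      exact ⟨⟨by omega, le_trans (Nat.le_of_dvd (by omega) h2) (le_trans hm.2 hn)⟩, h2⟩
    · rintro ⟨⟨h1, h2⟩, h3⟩
      refine ⟨by omega, h3, by omega⟩
  rw [Finset.prod_congr rfl step, Finset.prod_comm]
  refine Finset.prod_congr rfl fun d hd => ?_
  rw [← Finset.prod_filter, Finset.prod_const]
  congr 1
  have : Icc 1 n = Ioc 0 n := rfl
  rw [this]
  exact Nat.Ioc_filter_dvd_card_eq_div n d


set_option maxHeartbeats 2000000 in
/-- cyclotomic-exponent representation of the Racah summand:
`T_z = (−1)^z · q^{P(z)} · ∏_{d=2}^{D} Φ_d(q²)^{E_d(z)}` with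
`E_d(z) = ⌊(z+1)/d⌋ − ∑_i ⌊(z−a_i)/d⌋ − ∑_y ⌊(b_y−z)/d⌋` and
`P(z) = (z+1)(−z)/2 − ∑_i (z−a_i)(1−(z−a_i))/2 − ∑_y (b_y−z)(1−(b_y−z))/2`. -/
theorem racah_summand_cyclotomic_representation (q : ℂ) (hq : q ≠ 0)
    (a : Fin 4 → ℕ) (b : Fin 3 → ℕ) (z : ℕ)
    (ha : ∀ i, a i ≤ z) (hb : ∀ y, z ≤ b y)
    (D : ℕ) (hD : D = max (z + 1) (max (b 0 - z) (max (b 1 - z) (b 2 - z))))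
    (hqd : ∀ d : ℕ, 1 ≤ d → d ≤ D → q ^ (2 * d) ≠ 1)
    (E : ℕ → ℤ)
    (hE : ∀ d : ℕ, E d = (((z + 1) / d : ℕ) : ℤ) -
      (∑ i, (((z - a i) / d : ℕ) : ℤ)) - ∑ y, (((b y - z) / d : ℕ) : ℤ))
    (P : ℤ)
    (hP : P = ((z : ℤ) + 1) * (-(z : ℤ)) / 2 -
      (∑ i, ((z - a i : ℕ) : ℤ) * (1 - ((z - a i : ℕ) : ℤ)) / 2) -
      ∑ y, ((b y - z : ℕ) : ℤ) * (1 - ((b y - z : ℕ) : ℤ)) / 2) :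
    racahSummand q a b z =
      (-1) ^ z * q ^ P *
        ∏ d ∈ Finset.Icc 2 D, (Polynomial.cyclotomic d ℂ).eval (q ^ 2) ^ (E d) := by
  have hD1 : 1 ≤ D := by omega
  have hq2 : q ^ 2 - 1 ≠ 0 := sub_ne_zero.mpr (by simpa using hqd 1 le_rfl hD1)
  have hMb : ∀ y : Fin 3, b y - z ≤ D := by
    intro y
    have : b y = b 0 ∨ b y = b 1 ∨ b y = b 2 := by
      match y with
      | 0 => exact Or.inl rfl
      | 1 => exact Or.inr (Or.inl rfl)
      | 2 => exact Or.inr (Or.inr rfl)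
    omega
  have hF : ∀ d ∈ Finset.Icc 2 D, (cyclotomic d ℂ).eval (q ^ 2) ≠ 0 := fun d hd =>
    aux_phi_ne q D hqd d (by rw [Finset.mem_Icc] at hd; omega) (Finset.mem_Icc.mp hd).2
  have e0 := aux_qfact q hq hq2 D (z + 1) (by omega)
  have eA : (∏ i, qfact q (z - a i)) =
      q ^ (∑ i, ((z - a i : ℕ) : ℤ) * (1 - ((z - a i : ℕ) : ℤ)) / 2) *
        ∏ d ∈ Icc 2 D, ∏ i : Fin 4, (cyclotomic d ℂ).eval (q ^ 2) ^ ((z - a i) / d) := by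
    rw [Finset.prod_congr rfl
      (fun i (_ : i ∈ Finset.univ) => aux_qfact q hq hq2 D (z - a i) (by have := ha i; omega))]
    rw [Finset.prod_mul_distrib, aux_prod_zpow _ q hq, Finset.prod_comm]
  have eB : (∏ y, qfact q (b y - z)) =
      q ^ (∑ y, ((b y - z : ℕ) : ℤ) * (1 - ((b y - z : ℕ) : ℤ)) / 2) *
        ∏ d ∈ Icc 2 D, ∏ y : Fin 3, (cyclotomic d ℂ).eval (q ^ 2) ^ ((b y - z) / d) := by
    rw [Finset.prod_congr rfl
      (fun y (_ : y ∈ Finset.univ) => aux_qfact q hq hq2 D (b y - z) (hMb y))]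
    rw [Finset.prod_mul_distrib, aux_prod_zpow _ q hq, Finset.prod_comm]
  have hS0 : ((z + 1 : ℕ) : ℤ) * (1 - ((z + 1 : ℕ) : ℤ)) / 2 = ((z : ℤ) + 1) * (-(z : ℤ)) / 2 := by
    congr 1
    push_cast
    ring
  have hPe : P = ((z + 1 : ℕ) : ℤ) * (1 - ((z + 1 : ℕ) : ℤ)) / 2 -
      (∑ i, ((z - a i : ℕ) : ℤ) * (1 - ((z - a i : ℕ) : ℤ)) / 2) -
      ∑ y, ((b y - z : ℕ) : ℤ) * (1 - ((b y - z : ℕ) : ℤ)) / 2 := by rw [hP, hS0]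
  have hqP : q ^ P = q ^ (((z + 1 : ℕ) : ℤ) * (1 - ((z + 1 : ℕ) : ℤ)) / 2) /
      q ^ (∑ i, ((z - a i : ℕ) : ℤ) * (1 - ((z - a i : ℕ) : ℤ)) / 2) /
      q ^ (∑ y, ((b y - z : ℕ) : ℤ) * (1 - ((b y - z : ℕ) : ℤ)) / 2) := by
    rw [hPe, zpow_sub₀ hq, zpow_sub₀ hq]
  have hcyc : (∏ d ∈ Icc 2 D, (cyclotomic d ℂ).eval (q ^ 2) ^ E d) =
      (∏ d ∈ Icc 2 D, (cyclotomic d ℂ).eval (q ^ 2) ^ ((z + 1) / d)) /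
      ((∏ d ∈ Icc 2 D, ∏ i : Fin 4, (cyclotomic d ℂ).eval (q ^ 2) ^ ((z - a i) / d)) *
        ∏ d ∈ Icc 2 D, ∏ y : Fin 3, (cyclotomic d ℂ).eval (q ^ 2) ^ ((b y - z) / d)) := by
    rw [← Finset.prod_mul_distrib, ← Finset.prod_div_distrib]
    refine Finset.prod_congr rfl fun d hd => ?_
    have hFd := hF d hd
    rw [hE d, Finset.prod_pow_eq_pow_sum, Finset.prod_pow_eq_pow_sum]
    rw [show (((z + 1) / d : ℕ) : ℤ) - (∑ i, (((z - a i) / d : ℕ) : ℤ)) -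
        ∑ y, (((b y - z) / d : ℕ) : ℤ)
        = (((z + 1) / d : ℕ) : ℤ) - ((∑ i, (z - a i) / d : ℕ) : ℤ) -
          ((∑ y, (b y - z) / d : ℕ) : ℤ) by push_cast; ring]
    rw [zpow_sub₀ hFd, zpow_sub₀ hFd, zpow_natCast, zpow_natCast, zpow_natCast, div_div]
  rw [racahSummand, e0, eA, eB, hqP, hcyc]
  have hz0 : ∀ (k : ℤ), q ^ k ≠ 0 := fun k => zpow_ne_zero k hq
  have hpr : ∀ (f : ℕ → ℕ), (∏ d ∈ Icc 2 D, (cyclotomic d ℂ).eval (q ^ 2) ^ f d) ≠ 0 :=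
    fun f => Finset.prod_ne_zero_iff.mpr fun d hd => pow_ne_zero _ (hF d hd)
  have hprA : (∏ d ∈ Icc 2 D, ∏ i : Fin 4, (cyclotomic d ℂ).eval (q ^ 2) ^ ((z - a i) / d)) ≠ 0 :=
    Finset.prod_ne_zero_iff.mpr fun d hd =>
      Finset.prod_ne_zero_iff.mpr fun i _ => pow_ne_zero _ (hF d hd)
  have hprB : (∏ d ∈ Icc 2 D, ∏ y : Fin 3, (cyclotomic d ℂ).eval (q ^ 2) ^ ((b y - z) / d)) ≠ 0 :=
    Finset.prod_ne_zero_iff.mpr fun d hd =>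
      Finset.prod_ne_zero_iff.mpr fun y _ => pow_ne_zero _ (hF d hd)
  field_simp
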